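/- Let n, s ≥ 0 and r ≥ 1 be integers, a < b real numbers, a < τ_1 < … < τ_n < b, and 0 ≤ j ≤ r−1. Then the polynomial P_{n,r,s,a,j}(t) = ((t−a)^j/j!) Ω_{r−j−1}(t) ω(t) is nonnegative on the whole interval [a, b]. -/

import Mathlib

/-- `ω(t) = (b-t)^s ∏_{k=1}^n (τ_k - t)^2`. -/
noncomputable def omegaFun (b : ℝ) (n s : ℕ) (τ : ℕ → ℝ) (t : ℝ) : ℝ :=
  (b - t) ^ s * ∏ k ∈ Finset.range n, (τ k - t) ^ 2

/-- `Ω_m(t)`, the `m`-th partial sum of the Taylor expansion of `1/ω` at `t = a`. -/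
noncomputable def OmegaFun (a b : ℝ) (n s : ℕ) (τ : ℕ → ℝ) (m : ℕ) (t : ℝ) : ℝ :=
  ∑ ℓ ∈ Finset.range (m + 1),
    (t - a) ^ ℓ * iteratedDeriv ℓ (fun u => (omegaFun b n s τ u)⁻¹) a / (ℓ.factorial : ℝ)

/-- `P_{n,r,s,a,j}(t) = ((t-a)^j / j!) Ω_{r-j-1}(t) ω(t)`. -/
noncomputable def PaFun (a b : ℝ) (n r s : ℕ) (τ : ℕ → ℝ) (j : ℕ) (t : ℝ) : ℝ :=
  ((t - a) ^ j / (j.factorial : ℝ)) * OmegaFun a b n s τ (r - j - 1) t * omegaFun b n s τ t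


open Finset Function

noncomputable def Ffun (N : ℕ) (c : ℕ → ℝ) (q : ℕ → ℕ) : ℝ → ℝ :=
  fun u => ∏ k ∈ Finset.range N, ((c k - u) ^ q k)⁻¹

def Uset (N : ℕ) (c : ℕ → ℝ) : Set ℝ := {u : ℝ | ∀ k < N, u < c k}

lemma isOpen_Uset (N : ℕ) (c : ℕ → ℝ) : IsOpen (Uset N c) := by
  have : Uset N c = ⋂ k ∈ Finset.range N, Set.Iio (c k) := by
    ext u; simp [Uset]
  rw [this]
  exact isOpen_biInter_finset fun k _ => isOpen_Iio

lemma hasDerivAt_factor (m : ℕ) (ck x : ℝ) (h : ck - x ≠ 0) :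
    HasDerivAt (fun u => ((ck - u) ^ m)⁻¹) ((m : ℝ) * ((ck - x) ^ (m + 1))⁻¹) x := by
  have h1 : HasDerivAt (fun u : ℝ => ck - u) (-1) x := by
    simpa using (hasDerivAt_id x).const_sub ck
  have h2 : HasDerivAt (fun u : ℝ => (ck - u) ^ m)
      ((m : ℝ) * (ck - x) ^ (m - 1) * (-1)) x := h1.pow m
  have h3 : HasDerivAt (fun u => ((ck - u) ^ m)⁻¹)
      (-((m : ℝ) * (ck - x) ^ (m - 1) * (-1)) / ((ck - x) ^ m) ^ 2) x := h2.inv (pow_ne_zero m h)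
  convert h3 using 1
  rcases Nat.eq_zero_or_pos m with hm | hm
  · simp [hm]
  · obtain ⟨k, rfl⟩ : ∃ k, m = k + 1 := ⟨m - 1, by omega⟩
    simp only [Nat.add_sub_cancel]
    field_simp
    ring

lemma hasDerivAt_Ffun (N : ℕ) (c : ℕ → ℝ) (q : ℕ → ℕ) {x : ℝ} (hx : x ∈ Uset N c) :
    HasDerivAt (Ffun N c q)
      (∑ m ∈ Finset.range N, (q m : ℝ) * Ffun N c (Function.update q m (q m + 1)) x) x := by
  have hne : ∀ k ∈ Finset.range N, c k - x ≠ 0 := fun k hk =>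
    sub_ne_zero.mpr (ne_of_gt (hx k (Finset.mem_range.mp hk)))
  have h := HasDerivAt.fun_finsetProd (u := Finset.range N)
    (f := fun k => fun u => ((c k - u) ^ q k)⁻¹)
    (f' := fun k => (q k : ℝ) * ((c k - x) ^ (q k + 1))⁻¹)
    (fun k hk => hasDerivAt_factor (q k) (c k) x (hne k hk))
  refine h.congr_deriv (Eq.symm ?_)
  refine Finset.sum_congr rfl fun m hm => ?_
  have : Ffun N c (Function.update q m (q m + 1)) x
      = ((c m - x) ^ (q m + 1))⁻¹ * ∏ j ∈ (Finset.range N).erase m, ((c j - x) ^ q j)⁻¹ := by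
    rw [Ffun, ← Finset.mul_prod_erase _ _ hm]
    simp only [Function.update_self]
    congr 1
    refine Finset.prod_congr rfl fun j hj => ?_
    rw [Function.update_of_ne (Finset.ne_of_mem_erase hj)]
  rw [this, smul_eq_mul]
  ring

lemma iteratedDeriv_Ffun_eqOn (N : ℕ) (c : ℕ → ℝ) (ℓ : ℕ) (q : ℕ → ℕ) :
    ∃ (ι : Type) (_ : Fintype ι) (w : ι → ℝ) (p : ι → ℕ → ℕ),
      (∀ i, 0 ≤ w i) ∧
      Set.EqOn (iteratedDeriv ℓ (Ffun N c q))
        (fun u => ∑ i : ι, w i * Ffun N c (p i) u) (Uset N c) := by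
  induction ℓ generalizing q with
  | zero =>
    refine ⟨Unit, inferInstance, fun _ => 1, fun _ => q, fun _ => zero_le_one, fun x hx => ?_⟩
    simp [iteratedDeriv_zero]
  | succ ℓ IH =>
    obtain ⟨ι, _, w, p, hw, heq⟩ := IH q
    refine ⟨ι × Fin N, inferInstance, fun im => w im.1 * (p im.1 im.2 : ℝ),
      fun im => Function.update (p im.1) im.2 (p im.1 im.2 + 1),
      fun im => mul_nonneg (hw _) (Nat.cast_nonneg _), fun x hx => ?_⟩
    have hev : iteratedDeriv ℓ (Ffun N c q) =ᶠ[nhds x]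
        (fun u => ∑ i : ι, w i * Ffun N c (p i) u) :=
      heq.eventuallyEq_of_mem ((isOpen_Uset N c).mem_nhds hx)
    have hder : HasDerivAt (fun u => ∑ i : ι, w i * Ffun N c (p i) u)
        (∑ i : ι, w i * ∑ m ∈ Finset.range N,
          (p i m : ℝ) * Ffun N c (Function.update (p i) m (p i m + 1)) x) x :=
      HasDerivAt.fun_sum fun i _ => (hasDerivAt_Ffun N c (p i) hx).const_mul (w i)
    calc iteratedDeriv (ℓ + 1) (Ffun N c q) x
        = deriv (iteratedDeriv ℓ (Ffun N c q)) x := by rw [iteratedDeriv_succ]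
      _ = deriv (fun u => ∑ i : ι, w i * Ffun N c (p i) u) x := hev.deriv_eq
      _ = ∑ i : ι, w i * ∑ m ∈ Finset.range N,
            (p i m : ℝ) * Ffun N c (Function.update (p i) m (p i m + 1)) x := hder.deriv
      _ = ∑ im : ι × Fin N, (w im.1 * (p im.1 im.2 : ℝ)) *
            Ffun N c (Function.update (p im.1) im.2 (p im.1 im.2 + 1)) x := by
          rw [Fintype.sum_prod_type]
          refine Finset.sum_congr rfl fun i _ => ?_
          rw [Finset.mul_sum, ← Fin.sum_univ_eq_sum_range
            (fun m => w i * ((p i m : ℝ) * Ffun N c (Function.update (p i) m (p i m + 1)) x)) N]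
          exact Finset.sum_congr rfl fun m _ => (mul_assoc _ _ _).symm

lemma Ffun_nonneg (N : ℕ) (c : ℕ → ℝ) (q : ℕ → ℕ) {x : ℝ} (hx : x ∈ Uset N c) :
    0 ≤ Ffun N c q x :=
  Finset.prod_nonneg fun k hk => inv_nonneg.mpr (pow_nonneg
    (by linarith [hx k (Finset.mem_range.mp hk)]) _)

lemma iteratedDeriv_Ffun_nonneg (N : ℕ) (c : ℕ → ℝ) (q : ℕ → ℕ) (ℓ : ℕ) {x : ℝ}
    (hx : x ∈ Uset N c) : 0 ≤ iteratedDeriv ℓ (Ffun N c q) x := by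
  obtain ⟨ι, _, w, p, hw, heq⟩ := iteratedDeriv_Ffun_eqOn N c ℓ q
  rw [heq hx]
  exact Finset.sum_nonneg fun i _ => mul_nonneg (hw i) (Ffun_nonneg _ _ _ hx)


lemma omegaInv_eq_Ffun (b : ℝ) (n s : ℕ) (τ : ℕ → ℝ) :
    (fun u => (omegaFun b n s τ u)⁻¹)
      = Ffun (n + 1) (fun k => if k < n then τ k else b) (fun k => if k < n then 2 else s) := by
  funext u
  rw [omegaFun, mul_inv, ← Finset.prod_inv_distrib, Ffun, Finset.prod_range_succ,
    if_neg (lt_irrefl n), if_neg (lt_irrefl n), mul_comm]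
  congr 1
  exact Finset.prod_congr rfl fun k hk => by
    rw [if_pos (Finset.mem_range.mp hk), if_pos (Finset.mem_range.mp hk)]

/-- the polynomial `P_{n,r,s,a,j}` is nonnegative on `[a,b]`. -/
theorem P_nonneg
    (n s r : ℕ) (hr : 1 ≤ r) (a b : ℝ) (hab : a < b)
    (τ : ℕ → ℝ)
    (hτab : ∀ k < n, τ k ∈ Set.Ioo a b)
    (hτmono : ∀ i k, i < k → k < n → τ i < τ k)
    (j : ℕ) (hj : j ≤ r - 1)
    (t : ℝ) (ht : t ∈ Set.Icc a b) :
    0 ≤ PaFun a b n r s τ j t := by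
  obtain ⟨hta, htb⟩ := ht
  have ha : a ∈ Uset (n + 1) (fun k => if k < n then τ k else b) := by
    intro k hk
    by_cases h : k < n
    · simpa [h] using (hτab k h).1
    · simpa [h] using hab
  have hiter : ∀ ℓ, 0 ≤ iteratedDeriv ℓ (fun u => (omegaFun b n s τ u)⁻¹) a := by
    intro ℓ
    rw [omegaInv_eq_Ffun]
    exact iteratedDeriv_Ffun_nonneg _ _ _ _ ha
  have hΩ : 0 ≤ OmegaFun a b n s τ (r - j - 1) t := by
    refine Finset.sum_nonneg fun ℓ _ => ?_
    exact div_nonneg (mul_nonneg (pow_nonneg (by linarith) _) (hiter ℓ)) (Nat.cast_nonneg _)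
  have hω : 0 ≤ omegaFun b n s τ t :=
    mul_nonneg (pow_nonneg (by linarith) _) (Finset.prod_nonneg fun k _ => sq_nonneg _)
  exact mul_nonneg (mul_nonneg
    (div_nonneg (pow_nonneg (by linarith) _) (Nat.cast_nonneg _)) hΩ) hω
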